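/- For 0 < a ≤ b, ∫₀¹ [1/√(σ²+a²) − 1/√(σ²+b²)] dσ ≤ (1/2) log(1 + 4(b²−a²)/(3a²)). -/

import Mathlib

open Real

lemma aux_integral (c : ℝ) (hc : 0 < c) :
    (∫ σ in (0:ℝ)..1, 1 / Real.sqrt (σ^2 + c^2)) = Real.arsinh (1/c) := by
  have hcont : Continuous fun σ : ℝ => 1 / Real.sqrt (σ^2 + c^2) := by
    apply Continuous.div continuous_const
    · exact (continuous_pow 2 |>.add continuous_const).sqrt
    · intro x
      positivity
  have hderiv : ∀ σ ∈ Set.uIcc (0:ℝ) 1,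
      HasDerivAt (fun x : ℝ => Real.arsinh (x / c)) (1 / Real.sqrt (σ^2 + c^2)) σ := by
    intro σ _
    have h1 : HasDerivAt (fun x : ℝ => x / c) (1/c) σ := by
      simpa using (hasDerivAt_id σ).div_const c
    have h2 := (Real.hasDerivAt_arsinh (σ / c)).comp σ h1
    refine h2.congr_deriv ?_
    have hs : Real.sqrt (1 + (σ/c)^2) = Real.sqrt (σ^2 + c^2) / c := by
      rw [eq_div_iff hc.ne', ← Real.sqrt_sq hc.le, ← Real.sqrt_mul (by positivity)]
      congr 1
      field_simp
      rw [Real.sqrt_sq hc.le]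
      ring
    rw [hs]
    have h3 : Real.sqrt (σ^2 + c^2) > 0 := by positivity
    field_simp
  rw [intervalIntegral.integral_eq_sub_of_hasDerivAt hderiv
    (hcont.intervalIntegrable _ _)]
  simp

theorem stmt_6 (a b : ℝ) (ha : 0 < a) (hab : a ≤ b) :
    (∫ σ in (0:ℝ)..1, (1 / Real.sqrt (σ^2 + a^2) - 1 / Real.sqrt (σ^2 + b^2)))
      ≤ (1/2) * Real.log (1 + 4 * (b^2 - a^2) / (3 * a^2)) := by
  have hb : 0 < b := lt_of_lt_of_le ha hab
  have hconta : Continuous fun σ : ℝ => 1 / Real.sqrt (σ^2 + a^2) := by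
    apply Continuous.div continuous_const
    · exact (continuous_pow 2 |>.add continuous_const).sqrt
    · intro x; positivity
  have hcontb : Continuous fun σ : ℝ => 1 / Real.sqrt (σ^2 + b^2) := by
    apply Continuous.div continuous_const
    · exact (continuous_pow 2 |>.add continuous_const).sqrt
    · intro x; positivity
  rw [intervalIntegral.integral_sub (hconta.intervalIntegrable _ _)
    (hcontb.intervalIntegrable _ _), aux_integral a ha, aux_integral b hb]
  -- Step 1: arsinh (1/a) - arsinh (1/b) ≤ log b - log a
  have hsa : Real.sqrt (1 + (1/a)^2) = Real.sqrt (1 + a^2) / a := by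
    rw [eq_div_iff ha.ne', ← Real.sqrt_sq ha.le, ← Real.sqrt_mul (by positivity)]
    congr 1
    field_simp
    rw [Real.sqrt_sq ha.le]
    ring
  have hsb : Real.sqrt (1 + (1/b)^2) = Real.sqrt (1 + b^2) / b := by
    rw [eq_div_iff hb.ne', ← Real.sqrt_sq hb.le, ← Real.sqrt_mul (by positivity)]
    congr 1
    field_simp
    rw [Real.sqrt_sq hb.le]
    ring
  have hA : 0 < 1 + Real.sqrt (1 + a^2) := by positivity
  have hB : 0 < 1 + Real.sqrt (1 + b^2) := by positivity
  have harsa : Real.arsinh (1/a) = Real.log (1 + Real.sqrt (1 + a^2)) - Real.log a := by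
    rw [Real.arsinh, hsa, ← Real.log_div hA.ne' ha.ne']
    congr 1
    field_simp
  have harsb : Real.arsinh (1/b) = Real.log (1 + Real.sqrt (1 + b^2)) - Real.log b := by
    rw [Real.arsinh, hsb, ← Real.log_div hB.ne' hb.ne']
    congr 1
    field_simp
  have step1 : Real.arsinh (1/a) - Real.arsinh (1/b) ≤ Real.log b - Real.log a := by
    rw [harsa, harsb]
    have hmono : Real.log (1 + Real.sqrt (1 + a^2)) ≤ Real.log (1 + Real.sqrt (1 + b^2)) := by
      apply Real.log_le_log hA
      have : Real.sqrt (1 + a^2) ≤ Real.sqrt (1 + b^2) := by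
        apply Real.sqrt_le_sqrt
        nlinarith
      linarith
    linarith
  -- Step 2: log b - log a ≤ RHS
  have steq : Real.log b - Real.log a = (1/2) * Real.log (b^2 / a^2) := by
    rw [Real.log_div (by positivity) (by positivity), Real.log_pow, Real.log_pow]
    push_cast
    ring
  have key : b^2 / a^2 ≤ 1 + 4 * (b^2 - a^2) / (3 * a^2) := by
    have hrw : 1 + 4 * (b^2 - a^2) / (3 * a^2) = (3*a^2 + 4*(b^2 - a^2)) / (3*a^2) := by
      field_simp
    rw [hrw, div_le_div_iff₀ (by positivity) (by positivity)]
    have h2 : a^2 ≤ b^2 := by nlinarith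
    nlinarith [mul_le_mul_of_nonneg_left h2 (sq_nonneg a)]
  have step2 : Real.log b - Real.log a
      ≤ (1/2) * Real.log (1 + 4 * (b^2 - a^2) / (3 * a^2)) := by
    rw [steq]
    have := Real.log_le_log (by positivity : (0:ℝ) < b^2 / a^2) key
    linarith
  linarith
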